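/- Let S_n = (v_1,...,v_k, v,...,v) with n repetitions and S'_m = (v_1,...,v_k, v,...,v) with m repetitions, both under the one-layer Transformer with dispersion bound α_{i,j} ≤ exp(δ)/i, Lipschitz MLP ψ (constant L_ψ), and token norms at most r. Then ‖T(S_n)_{n+k} − T(S'_m)_{m+k}‖ ≤ (L_ψ+1)·2rk·exp(δ)·(1/(n+k) + 1/(m+k)); in particular the last-token representations of two repeated sequences of different lengths become arbitrarily close as n, m → ∞. -/

import Mathlib

/-- Last-token representations of two repeated sequences with the same prefix and
repeated token but different repetition counts `n`, `m` are within
`(Lψ+1)·2·r·k·exp δ·(1/(n+k) + 1/(m+k))` of each other. -/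
theorem stmt_11 (d k n m : ℕ) (hn : 1 ≤ n) (hm : 1 ≤ m)
    (r δ Lψ : ℝ) (hLψ : 0 ≤ Lψ)
    (ψ : EuclideanSpace ℝ (Fin d) → EuclideanSpace ℝ (Fin d))
    (hψ : ∀ x y, ‖ψ x - ψ y‖ ≤ Lψ * ‖x - y‖)
    (v : ℕ → EuclideanSpace ℝ (Fin d)) (vrep : EuclideanSpace ℝ (Fin d))
    (hv : ∀ j ∈ Finset.range k, ‖v j‖ ≤ r) (hvrep : ‖vrep‖ ≤ r)
    (α β : ℕ → ℝ)
    (hα0 : ∀ j ∈ Finset.range (n + k), 0 ≤ α j)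
    (hαsum : ∑ j ∈ Finset.range (n + k), α j = 1)
    (hαb : ∀ j ∈ Finset.range (n + k), α j ≤ Real.exp δ / (n + k))
    (hβ0 : ∀ j ∈ Finset.range (m + k), 0 ≤ β j)
    (hβsum : ∑ j ∈ Finset.range (m + k), β j = 1)
    (hβb : ∀ j ∈ Finset.range (m + k), β j ≤ Real.exp δ / (m + k)) :
    ‖(ψ ((∑ j ∈ Finset.range k, α j • v j) +
          (∑ j ∈ Finset.Ico k (n + k), α j • vrep) + vrep) +
        ((∑ j ∈ Finset.range k, α j • v j) +
          (∑ j ∈ Finset.Ico k (n + k), α j • vrep) + vrep)) -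
      (ψ ((∑ j ∈ Finset.range k, β j • v j) +
          (∑ j ∈ Finset.Ico k (m + k), β j • vrep) + vrep) +
        ((∑ j ∈ Finset.range k, β j • v j) +
          (∑ j ∈ Finset.Ico k (m + k), β j • vrep) + vrep))‖ ≤
      (Lψ + 1) * (2 * r * k * Real.exp δ) * (1 / (n + k) + 1 / (m + k)) := by
  have hr : 0 ≤ r := le_trans (norm_nonneg _) hvrep
  have hk1 : k ≤ n + k := Nat.le_add_left k n
  have hk2 : k ≤ m + k := Nat.le_add_left k m
  set A := (∑ j ∈ Finset.range k, α j • v j) +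
      (∑ j ∈ Finset.Ico k (n + k), α j • vrep) + vrep with hAdef
  set B := (∑ j ∈ Finset.range k, β j • v j) +
      (∑ j ∈ Finset.Ico k (m + k), β j • vrep) + vrep with hBdef
  have hsa : ∑ j ∈ Finset.Ico k (n + k), α j = 1 - ∑ j ∈ Finset.range k, α j := by
    have h1 := Finset.sum_Ico_consecutive α (Nat.zero_le k) hk1
    rw [← Finset.range_eq_Ico, ← Finset.range_eq_Ico] at h1
    linarith [hαsum]
  have hsb : ∑ j ∈ Finset.Ico k (m + k), β j = 1 - ∑ j ∈ Finset.range k, β j := by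
    have h1 := Finset.sum_Ico_consecutive β (Nat.zero_le k) hk2
    rw [← Finset.range_eq_Ico, ← Finset.range_eq_Ico] at h1
    linarith [hβsum]
  have hAB : A - B = ∑ j ∈ Finset.range k, (α j - β j) • (v j - vrep) := by
    rw [hAdef, hBdef, ← Finset.sum_smul, ← Finset.sum_smul, hsa, hsb]
    simp only [sub_smul, smul_sub, Finset.sum_sub_distrib, ← Finset.sum_smul, one_smul]
    abel
  have hnk : (0:ℝ) < (n : ℝ) + (k : ℝ) := by positivity
  have hmk : (0:ℝ) < (m : ℝ) + (k : ℝ) := by positivity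
  have hDnorm : ‖A - B‖ ≤ (2 * r * k * Real.exp δ) * (1 / (n + k) + 1 / (m + k)) := by
    rw [hAB]
    calc ‖∑ j ∈ Finset.range k, (α j - β j) • (v j - vrep)‖
        ≤ ∑ j ∈ Finset.range k, ‖(α j - β j) • (v j - vrep)‖ :=
          norm_sum_le _ _
      _ ≤ ∑ j ∈ Finset.range k,
            (Real.exp δ / (n + k) + Real.exp δ / (m + k)) * (2 * r) := by
          apply Finset.sum_le_sum
          intro j hj
          have hjn : j ∈ Finset.range (n + k) :=
            Finset.mem_range.mpr (lt_of_lt_of_le (Finset.mem_range.mp hj) hk1)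
          have hjm : j ∈ Finset.range (m + k) :=
            Finset.mem_range.mpr (lt_of_lt_of_le (Finset.mem_range.mp hj) hk2)
          rw [norm_smul, Real.norm_eq_abs]
          have h1 : |α j - β j| ≤ Real.exp δ / (n + k) + Real.exp δ / (m + k) := by
            rw [abs_sub_le_iff]
            constructor
            · have := hαb j hjn; have := hβ0 j hjm
              have h2 : (0:ℝ) ≤ Real.exp δ / (m + k) := by positivity
              push_cast at *
              linarith
            · have := hβb j hjm; have := hα0 j hjn
              have h2 : (0:ℝ) ≤ Real.exp δ / (n + k) := by positivity
              push_cast at *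
              linarith
          have h2 : ‖v j - vrep‖ ≤ 2 * r := by
            calc ‖v j - vrep‖ ≤ ‖v j‖ + ‖vrep‖ := norm_sub_le _ _
              _ ≤ r + r := add_le_add (hv j hj) hvrep
              _ = 2 * r := by ring
          exact mul_le_mul h1 h2 (norm_nonneg _) (by positivity)
      _ = (2 * r * k * Real.exp δ) * (1 / (n + k) + 1 / (m + k)) := by
          rw [Finset.sum_const, Finset.card_range, nsmul_eq_mul]
          field_simp
  calc ‖(ψ A + A) - (ψ B + B)‖
      ≤ ‖ψ A - ψ B‖ + ‖A - B‖ := by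
        have : (ψ A + A) - (ψ B + B) = (ψ A - ψ B) + (A - B) := by abel
        rw [this]; exact norm_add_le _ _
    _ ≤ Lψ * ‖A - B‖ + ‖A - B‖ := by
        have := hψ A B; linarith
    _ = (Lψ + 1) * ‖A - B‖ := by ring
    _ ≤ (Lψ + 1) * ((2 * r * k * Real.exp δ) * (1 / (n + k) + 1 / (m + k))) := by
        apply mul_le_mul_of_nonneg_left hDnorm; linarith
    _ = (Lψ + 1) * (2 * r * k * Real.exp δ) * (1 / (n + k) + 1 / (m + k)) := by ring
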